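/- Let $A$ be an $n\times n$ symmetric matrix with minimum eigenvalue $\lambda_1 < 0$, $b \in \mathbb{R}^n$, $\rho > 0$, and let $(\tilde x, \tilde y)$ be an optimal solution to the convex reformulation $\min\{\frac{1}{2}x^T(A-\lambda_1 I)x + b^T x + \frac{\rho}{3}y^{3/2} + \frac{\lambda_1}{2}y : \|x\|^2 \le y\}$ with $\|\tilde x\|^2 < \tilde y$. Then $b^T v = 0$ for any unit eigenvector $v$ of $A$ associated with $\lambda_1$, and there exists a real $\zeta$ such that $\|\tilde x + \zeta v\|^2 = \tilde y$ and $\tilde x + \zeta v$ is a global minimizer of $f_1(x) = \frac{1}{2}x^T A x + b^T x + \frac{\rho}{3}\|x\|^3$. -/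

import Mathlib

open Matrix

noncomputable def f1 {n : ℕ} (A : Matrix (Fin n) (Fin n) ℝ) (b : Fin n → ℝ) (ρ : ℝ)
    (x : Fin n → ℝ) : ℝ :=
  (1/2) * (x ⬝ᵥ A.mulVec x) + b ⬝ᵥ x + (ρ/3) * Real.sqrt (x ⬝ᵥ x) ^ 3

noncomputable def f2 {n : ℕ} (A : Matrix (Fin n) (Fin n) ℝ) (b : Fin n → ℝ) (ρ lam1 : ℝ)
    (x : Fin n → ℝ) (y : ℝ) : ℝ :=
  (1/2) * (x ⬝ᵥ (A - lam1 • (1 : Matrix (Fin n) (Fin n) ℝ)).mulVec x) + b ⬝ᵥ x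
    + (ρ/3) * y ^ ((3:ℝ)/2) + (lam1/2) * y

lemma dp_self_nonneg {n : ℕ} (x : Fin n → ℝ) : 0 ≤ x ⬝ᵥ x :=
  Finset.sum_nonneg fun i _ => mul_self_nonneg (x i)

lemma rpow32 (a : ℝ) (ha : 0 ≤ a) : a ^ ((3:ℝ)/2) = Real.sqrt a ^ 3 := by
  rw [Real.sqrt_eq_rpow, ← Real.rpow_natCast (a ^ ((1:ℝ)/2)) 3, ← Real.rpow_mul ha]
  norm_num

lemma f2_eq_f1 {n : ℕ} (A : Matrix (Fin n) (Fin n) ℝ) (b : Fin n → ℝ) (ρ lam1 : ℝ)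
    (x : Fin n → ℝ) : f2 A b ρ lam1 x (x ⬝ᵥ x) = f1 A b ρ x := by
  unfold f1 f2
  rw [rpow32 _ (dp_self_nonneg x), Matrix.sub_mulVec, dotProduct_sub,
    Matrix.smul_mulVec, Matrix.one_mulVec, dotProduct_smul]
  simp only [smul_eq_mul]
  ring

lemma shift_expand {n : ℕ} (M : Matrix (Fin n) (Fin n) ℝ) (hM : M.IsSymm)
    (x v : Fin n → ℝ) (hMv : M.mulVec v = 0) (t : ℝ) :
    (x + t • v) ⬝ᵥ M.mulVec (x + t • v) = x ⬝ᵥ M.mulVec x := by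
  have hvMx : v ⬝ᵥ M.mulVec x = 0 := by
    rw [Matrix.dotProduct_mulVec, ← Matrix.mulVec_transpose, hM.eq, hMv, zero_dotProduct]
  rw [Matrix.mulVec_add, Matrix.mulVec_smul, hMv, smul_zero, add_zero,
    add_dotProduct, smul_dotProduct, hvMx, smul_zero, add_zero]

lemma f2_shift {n : ℕ} (A : Matrix (Fin n) (Fin n) ℝ) (hA : A.IsSymm)
    (b : Fin n → ℝ) (ρ lam1 : ℝ) (x v : Fin n → ℝ) (hev : A.mulVec v = lam1 • v)
    (t y : ℝ) :
    f2 A b ρ lam1 (x + t • v) y = f2 A b ρ lam1 x y + t * (b ⬝ᵥ v) := by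
  have hMsymm : (A - lam1 • (1 : Matrix (Fin n) (Fin n) ℝ)).IsSymm := by
    unfold Matrix.IsSymm
    rw [Matrix.transpose_sub, hA.eq, Matrix.transpose_smul, Matrix.transpose_one]
  have hMv : (A - lam1 • (1 : Matrix (Fin n) (Fin n) ℝ)).mulVec v = 0 := by
    rw [Matrix.sub_mulVec, hev, Matrix.smul_mulVec, Matrix.one_mulVec, sub_self]
  unfold f2
  rw [shift_expand _ hMsymm _ _ hMv, dotProduct_add, dotProduct_smul]
  simp only [smul_eq_mul]
  ring

/-- Hard-case recovery: if `(tx, ty)` is optimal for the reformulation with `‖tx‖² < ty`,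
then `bᵀv = 0` for any unit eigenvector `v` of `λ₁`, and a suitable shift `tx + ζ v`
with `‖tx + ζ v‖² = ty` is a global minimizer of `f₁`. -/
theorem stmt_3 {n : ℕ} (A : Matrix (Fin n) (Fin n) ℝ) (hA : A.IsSymm)
    (b : Fin n → ℝ) (ρ lam1 : ℝ) (hρ : 0 < ρ) (hlam1 : lam1 < 0)
    (hlb : ∀ x : Fin n → ℝ, lam1 * (x ⬝ᵥ x) ≤ x ⬝ᵥ A.mulVec x)
    (tx : Fin n → ℝ) (ty : ℝ) (hlt : tx ⬝ᵥ tx < ty)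
    (hopt : ∀ x : Fin n → ℝ, ∀ y : ℝ, x ⬝ᵥ x ≤ y → f2 A b ρ lam1 tx ty ≤ f2 A b ρ lam1 x y)
    (v : Fin n → ℝ) (hv : v ⬝ᵥ v = 1) (hev : A.mulVec v = lam1 • v) :
    b ⬝ᵥ v = 0 ∧
    ∃ ζ : ℝ, (tx + ζ • v) ⬝ᵥ (tx + ζ • v) = ty ∧
      ∀ x : Fin n → ℝ, f1 A b ρ (tx + ζ • v) ≤ f1 A b ρ x := by
  set c : ℝ := tx ⬝ᵥ v with hc
  set s : ℝ := tx ⬝ᵥ tx with hs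
  -- norm expansion
  have hexp : ∀ t : ℝ, (tx + t • v) ⬝ᵥ (tx + t • v) = s + 2 * t * c + t ^ 2 := by
    intro t
    have hvc : v ⬝ᵥ tx = c := dotProduct_comm v tx
    rw [add_dotProduct, dotProduct_add, dotProduct_add, smul_dotProduct, smul_dotProduct,
      dotProduct_smul, dotProduct_smul, hvc, hv]
    simp [hc, smul_eq_mul]
    ring
  -- part 1 : b ⬝ᵥ v = 0
  have hbv : b ⬝ᵥ v = 0 := by
    by_contra hne
    have hε : 0 < ty - s := sub_pos.mpr hlt
    set δ : ℝ := min 1 ((ty - s) / (2 * |c| + 1)) with hδdef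
    have hden : (0:ℝ) < 2 * |c| + 1 := by positivity
    have hδpos : 0 < δ := lt_min one_pos (div_pos hε hden)
    set t : ℝ := -(b ⬝ᵥ v) / |b ⬝ᵥ v| * δ with ht
    have habs : |b ⬝ᵥ v| ≠ 0 := abs_ne_zero.mpr hne
    have htabs : |t| = δ := by
      rw [ht, abs_mul, abs_div, abs_neg, abs_abs, div_self habs, one_mul,
        abs_of_pos hδpos]
    have hfeas : (tx + t • v) ⬝ᵥ (tx + t • v) ≤ ty := by
      rw [hexp t]
      have h1 : 2 * t * c ≤ 2 * δ * |c| := by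
        calc 2 * t * c ≤ |2 * t * c| := le_abs_self _
          _ = 2 * δ * |c| := by rw [abs_mul, abs_mul, htabs]; simp [abs_of_nonneg]
      have h2 : t ^ 2 = δ ^ 2 := by rw [← sq_abs, htabs]
      have h3 : δ ^ 2 ≤ δ := by
        have : δ ≤ 1 := min_le_left _ _
        nlinarith
      have h4 : δ * (2 * |c| + 1) ≤ ty - s := by
        have : δ ≤ (ty - s) / (2 * |c| + 1) := min_le_right _ _
        calc δ * (2 * |c| + 1) ≤ (ty - s) / (2 * |c| + 1) * (2 * |c| + 1) := by
              exact mul_le_mul_of_nonneg_right this (le_of_lt hden)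
          _ = ty - s := div_mul_cancel₀ _ (ne_of_gt hden)
      nlinarith
    have := hopt (tx + t • v) ty hfeas
    rw [f2_shift A hA b ρ lam1 tx v hev t ty] at this
    have htbv : t * (b ⬝ᵥ v) < 0 := by
      have : t * (b ⬝ᵥ v) = -(|b ⬝ᵥ v| * δ) := by
        rw [ht]
        field_simp
        linear_combination sq_abs (b ⬝ᵥ v)
      rw [this]
      have : 0 < |b ⬝ᵥ v| := abs_pos.mpr hne
      nlinarith
    linarith
  refine ⟨hbv, ?_⟩
  -- part 2 : choose ζ
  have hdisc : 0 ≤ c ^ 2 + (ty - s) := by nlinarith [sub_pos.mpr hlt]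
  set ζ : ℝ := -c + Real.sqrt (c ^ 2 + (ty - s)) with hζ
  have hnorm : (tx + ζ • v) ⬝ᵥ (tx + ζ • v) = ty := by
    rw [hexp ζ, hζ]
    have hsq : Real.sqrt (c ^ 2 + (ty - s)) ^ 2 = c ^ 2 + (ty - s) := Real.sq_sqrt hdisc
    nlinarith [hsq]
  refine ⟨ζ, hnorm, fun x => ?_⟩
  have h1 : f1 A b ρ (tx + ζ • v) = f2 A b ρ lam1 tx ty := by
    rw [← f2_eq_f1, hnorm, f2_shift A hA b ρ lam1 tx v hev ζ ty, hbv, mul_zero, add_zero]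
  have h2 : f2 A b ρ lam1 tx ty ≤ f1 A b ρ x := by
    rw [← f2_eq_f1 A b ρ lam1 x]
    exact hopt x (x ⬝ᵥ x) le_rfl
  linarith
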